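/- Let X be a topological space and col : X → X → Prop a symmetric relation. Let V and V' be finite pumped configurations in X, with pebble graphs G = (V,E) and G' = (V',E') whose edge paths satisfy the edge-planner guarantee. Let C : Fin m → V and C' : Fin m → V' be configurations and suppose there exists a multi-robot path for m robots from C to C'. Let D : Fin m → V and D' : Fin m → V' be configurations with D ≡ C (with respect to G) and D' ≡ C' (with respect to G'). Then there exists a permutation σ of Fin m and a multi-robot path for m robots from D to D' ∘ σ. -/

import Mathlib

/-- A multi-robot path for `m` robots from `A` to `B`: a continuous map
`f : [0,1] → (Fin m → X)` with `f 0 = A`, `f 1 = B`, such that at every time `t`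
no two distinct robots collide. -/
def MultiRobotPath {X : Type*} [TopologicalSpace X] (col : X → X → Prop) {m : ℕ}
    (A B : Fin m → X) : Prop :=
  ∃ f : unitInterval → (Fin m → X), Continuous f ∧ f 0 = A ∧ f 1 = B ∧
    ∀ t : unitInterval, ∀ i j : Fin m, i ≠ j → ¬ col (f t i) (f t j)

/-- A pumped configuration: a finite set of single-robot configurations, any two
distinct members of which are non-colliding. -/
def IsPumped {X : Type*} (col : X → X → Prop) (V : Set X) : Prop :=
  V.Finite ∧ ∀ v ∈ V, ∀ v' ∈ V, v ≠ v' → ¬ col v v'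

/-- Two placements have the same signature: every connected component of `G`
contains the same number of robots/pebbles of each. -/
def SameSignature {V ι κ : Type*} (G : SimpleGraph V) (S : ι → V) (T : κ → V) : Prop :=
  ∀ K : G.ConnectedComponent,
    Nat.card {i : ι // G.connectedComponentMk (S i) = K} =
    Nat.card {j : κ // G.connectedComponentMk (T j) = K}

attribute [local instance] Classical.propDecidable

set_option maxHeartbeats 2000000

section Helpers
variable {X : Type*} [TopologicalSpace X] {col : X → X → Prop} {m : ℕ}

lemma MultiRobotPath.trans' {A B C : Fin m → X} (h1 : MultiRobotPath col A B)
    (h2 : MultiRobotPath col B C) : MultiRobotPath col A C := by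
  obtain ⟨f, hf, hf0, hf1, hfcol⟩ := h1
  obtain ⟨g, hg, hg0, hg1, hgcol⟩ := h2
  let γ : Path A B := ⟨⟨f, hf⟩, hf0, hf1⟩
  let δ : Path B C := ⟨⟨g, hg⟩, hg0, hg1⟩
  refine ⟨γ.trans δ, (γ.trans δ).continuous, (γ.trans δ).source, (γ.trans δ).target, ?_⟩
  intro t i j hij
  rw [Path.trans_apply]
  split_ifs
  · exact hfcol _ i j hij
  · exact hgcol _ i j hij

lemma MultiRobotPath.reindex {A B : Fin m → X} (h : MultiRobotPath col A B)
    (τ : Equiv.Perm (Fin m)) : MultiRobotPath col (A ∘ τ) (B ∘ τ) := by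
  obtain ⟨f, hf, hf0, hf1, hfcol⟩ := h
  refine ⟨fun t i => f t (τ i), ?_, by ext i; simp [hf0], by ext i; simp [hf1], ?_⟩
  · exact continuous_pi fun i => (continuous_apply (τ i)).comp hf
  · intro t i j hij
    exact hfcol t (τ i) (τ j) (fun hc => hij (τ.injective hc))

end Helpers

namespace PebbleAux

variable {W : Type*} (G : SimpleGraph W)

/-- The subgraph of `G` restricted to the allowed vertex set `A`. -/
def HG (A : Finset W) : SimpleGraph W where
  Adj x y := G.Adj x y ∧ x ∈ A ∧ y ∈ A
  symm := ⟨fun _ _ ⟨h, hx, hy⟩ => ⟨h.symm, hy, hx⟩⟩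
  loopless := ⟨fun _ ⟨h, _, _⟩ => h.ne rfl⟩

variable {G}

lemma HG_le (A : Finset W) : HG G A ≤ G := fun _ _ h => h.1

lemma HG_mono {A A' : Finset W} (h : A' ⊆ A) : HG G A' ≤ HG G A :=
  fun _ _ ⟨ha, hx, hy⟩ => ⟨ha, h hx, h hy⟩

lemma HG_univ [Fintype W] : HG G (Finset.univ) = G := by
  ext x y; simp [HG]

lemma mem_A_of_mem_support {A : Finset W} {x y : W} (w : (HG G A).Walk x y)
    (hx : x ∈ A) {z : W} (hz : z ∈ w.support) : z ∈ A := by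
  induction w with
  | nil => simp at hz; subst hz; exact hx
  | cons h w ih =>
    rcases List.mem_cons.1 (by simpa using hz) with h1 | h1
    · subst h1; exact hx
    · exact ih h.2.2 h1

lemma reach_of_mem_support {A : Finset W} {x y : W} (w : (HG G A).Walk x y)
    {z : W} (hz : z ∈ w.support) : (HG G A).Reachable x z :=
  ⟨w.takeUntil z hz⟩

/-- A walk avoiding `b` transfers to the graph with `b` removed. -/
lemma reach_erase_of_not_mem_support {A : Finset W} {x y b : W}
    (w : (HG G A).Walk x y) (hb : b ∉ w.support) : (HG G (A.erase b)).Reachable x y := by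
  refine ⟨w.transfer (HG G (A.erase b)) ?_⟩
  intro e he
  induction e with
  | h u v =>
    have hu : u ∈ w.support := w.fst_mem_support_of_mem_edges he
    have hv : v ∈ w.support := w.snd_mem_support_of_mem_edges he
    have hadj : (HG G A).Adj u v := w.adj_of_mem_edges he
    simp only [SimpleGraph.mem_edgeSet]
    refine ⟨hadj.1, Finset.mem_erase.2 ⟨?_, hadj.2.1⟩, Finset.mem_erase.2 ⟨?_, hadj.2.2⟩⟩
    · rintro rfl; exact hb hu
    · rintro rfl; exact hb hv

/-- The farthest-vertex avoidance lemma: a shortest walk from `s0` to `x` avoids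
any `b` at maximal distance. -/
lemma avoid_lemma {A : Finset W} {s0 b x : W}
    (hreach : (HG G A).Reachable s0 x)
    (hmax : (HG G A).dist s0 x ≤ (HG G A).dist s0 b) (hxb : x ≠ b) :
    (HG G (A.erase b)).Reachable s0 x := by
  obtain ⟨w, hw⟩ := hreach.exists_walk_length_eq_dist
  refine reach_erase_of_not_mem_support w ?_
  intro hb
  have h1 : (HG G A).dist s0 b ≤ (w.takeUntil b hb).length :=
    SimpleGraph.dist_le _
  have h2 : (HG G A).dist b x ≤ (w.dropUntil b hb).length :=
    SimpleGraph.dist_le _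
  have h3 : (w.takeUntil b hb).length + (w.dropUntil b hb).length = w.length := by
    rw [← SimpleGraph.Walk.length_append, SimpleGraph.Walk.take_spec]
  -- dist s0 x ≤ dist s0 b ≤ len take, and len take + len drop = dist s0 x
  have h4 : (w.dropUntil b hb).length = 0 := by omega
  have := SimpleGraph.Walk.eq_of_length_eq_zero h4
  exact hxb this.symm


/-- One pebble slides along an edge of `HG G A` to an unoccupied vertex. -/
def SetMoveA (G : SimpleGraph W) (A : Finset W) (S S' : Finset W) : Prop :=
  ∃ v w, v ∈ S ∧ w ∉ S ∧ (HG G A).Adj v w ∧ S' = insert w (S.erase v)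

lemma setMoveA_mono {A A' : Finset W} (h : A' ⊆ A) {S S' : Finset W}
    (hm : SetMoveA G A' S S') : SetMoveA G A S S' := by
  obtain ⟨v, w, h1, h2, h3, h4⟩ := hm
  exact ⟨v, w, h1, h2, HG_mono h h3, h4⟩

lemma setMoveA_insert {A A' : Finset W} (hsub : A' ⊆ A) {b : W} (hb : b ∉ A')
    {S S' : Finset W} (hm : SetMoveA G A' S S') :
    SetMoveA G A (insert b S) (insert b S') := by
  obtain ⟨v, w, h1, h2, h3, h4⟩ := hm
  have hvb : v ≠ b := fun h => hb (h ▸ h3.2.1)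
  have hwb : w ≠ b := fun h => hb (h ▸ h3.2.2)
  refine ⟨v, w, Finset.mem_insert_of_mem h1, ?_, HG_mono hsub h3, ?_⟩
  · simp only [Finset.mem_insert]
    rintro (h | h)
    · exact hwb h
    · exact h2 h
  · subst h4
    have hwv : w ≠ v := h3.ne'
    ext a
    by_cases hav : a = v <;> by_cases hab : a = b <;> by_cases haw : a = w <;>
      simp_all [Finset.mem_insert, Finset.mem_erase]

lemma rtg_setMoveA_insert {A A' : Finset W} (hsub : A' ⊆ A) {b : W} (hb : b ∉ A')
    {S S' : Finset W} (hm : Relation.ReflTransGen (SetMoveA G A') S S') :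
    Relation.ReflTransGen (SetMoveA G A) (insert b S) (insert b S') := by
  induction hm with
  | refl => exact Relation.ReflTransGen.refl
  | tail _ h ih => exact ih.tail (setMoveA_insert hsub hb h)

lemma rtg_setMoveA_mono {A A' : Finset W} (h : A' ⊆ A) {S S' : Finset W}
    (hm : Relation.ReflTransGen (SetMoveA G A') S S') :
    Relation.ReflTransGen (SetMoveA G A) S S' := by
  induction hm with
  | refl => exact Relation.ReflTransGen.refl
  | tail _ h' ih => exact ih.tail (setMoveA_mono h h')

/-- Pull a pebble to the empty vertex `b` along a walk: some pebble `u` on the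
walk vacates its spot and `b` gets filled. -/
lemma pull_lemma {A : Finset W} {S : Finset W} :
    ∀ {b x : W} (w : (HG G A).Walk b x), x ∈ S → b ∉ S →
    ∃ u ∈ S, u ∈ w.support ∧
      Relation.ReflTransGen (SetMoveA G A) S (insert b (S.erase u)) := by
  intro b x w
  induction w with
  | nil => intro hx hb; exact absurd hx hb
  | @cons b y x h w ih =>
    intro hx hb
    by_cases hy : y ∈ S
    · refine ⟨y, hy, ?_, Relation.ReflTransGen.single ⟨y, b, hy, hb, h.symm, rfl⟩⟩
      simp [SimpleGraph.Walk.support_cons, SimpleGraph.Walk.start_mem_support]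
    · obtain ⟨u, hu, husup, hrtg⟩ := ih hx hy
      have hby : b ≠ y := (HG_le A h).ne
      have hbS1 : b ∉ insert y (S.erase u) := by
        simp only [Finset.mem_insert, Finset.mem_erase]
        rintro (rfl | ⟨-, h'⟩)
        · exact hby rfl
        · exact hb h'
      have hyS1 : y ∈ insert y (S.erase u) := Finset.mem_insert_self _ _
      refine ⟨u, hu, by simp [SimpleGraph.Walk.support_cons, husup], ?_⟩
      refine hrtg.tail ⟨y, b, hyS1, hbS1, (HG_mono (le_refl A) h).symm, ?_⟩
      have : (insert y (S.erase u)).erase y = S.erase u :=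
        Finset.erase_insert (fun hc => hy (Finset.mem_of_mem_erase hc))
      rw [this]

/-- Push the pebble at `b` along a walk towards unoccupied `t`: it lands at the
first unoccupied vertex `z` of the walk. -/
lemma push_lemma {A : Finset W} {S : Finset W} :
    ∀ {b t : W} (w : (HG G A).Walk b t), b ∈ S → t ∉ S →
    ∃ z ∈ w.support, z ∉ S ∧
      Relation.ReflTransGen (SetMoveA G A) S (insert z (S.erase b)) := by
  intro b t w
  induction w with
  | nil => intro hb ht; exact absurd hb ht
  | @cons b y t h w ih =>
    intro hb ht
    by_cases hy : y ∈ S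
    · obtain ⟨z, hzsup, hz, hrtg⟩ := ih hy ht
      have hby : b ≠ y := (HG_le A h).ne
      have hbz : b ≠ z := fun h' => hz (h' ▸ hb)
      have hbS1 : b ∈ insert z (S.erase y) := by
        simp only [Finset.mem_insert, Finset.mem_erase]
        exact Or.inr ⟨hby, hb⟩
      have hyS1 : y ∉ insert z (S.erase y) := by
        simp only [Finset.mem_insert, Finset.mem_erase]
        rintro (rfl | ⟨h', -⟩)
        · exact hz hy
        · exact h' rfl
      refine ⟨z, by simp [SimpleGraph.Walk.support_cons, hzsup], hz, ?_⟩
      refine hrtg.tail ⟨b, y, hbS1, hyS1, h, ?_⟩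
      ext a
      by_cases hay : a = y <;> by_cases hab : a = b <;> by_cases haz : a = z <;>
        simp_all [Finset.mem_insert, Finset.mem_erase]
    · refine ⟨y, by simp [SimpleGraph.Walk.support_cons], hy,
        Relation.ReflTransGen.single ⟨b, y, hb, hy, h, rfl⟩⟩


/-- The core combinatorial lemma: equal pebble counts in every connected
component of the restricted graph allow reconfiguration by single moves. -/
lemma core (A : Finset W) : ∀ S T : Finset W, S ⊆ A → T ⊆ A →
    (∀ x : W, (S.filter (fun y => (HG G A).Reachable x y)).card
            = (T.filter (fun y => (HG G A).Reachable x y)).card) →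
    Relation.ReflTransGen (SetMoveA G A) S T := by
  induction A using Finset.strongInduction with
  | _ A ih =>
  intro S T hSA hTA hcount
  rcases Finset.eq_empty_or_nonempty S with hS | ⟨s0, hs0⟩
  · have hT : T = ∅ := by
      by_contra hT
      obtain ⟨t, ht⟩ := Finset.nonempty_iff_ne_empty.mpr hT
      have h1 := hcount t
      rw [hS, Finset.filter_empty, Finset.card_empty] at h1
      have h2 : t ∈ T.filter (fun y => (HG G A).Reachable t y) :=
        Finset.mem_filter.mpr ⟨ht, SimpleGraph.Reachable.refl t⟩
      have h3 := Finset.card_pos.mpr ⟨t, h2⟩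
      omega
    rw [hS, hT]
  · set RA := HG G A with hRA
    set R := (S ∪ T).filter (fun y => RA.Reachable s0 y) with hRdef
    have hs0R : s0 ∈ R :=
      Finset.mem_filter.mpr ⟨Finset.mem_union_left _ hs0, SimpleGraph.Reachable.refl s0⟩
    obtain ⟨b, hbR, hbmax⟩ := R.exists_max_image (fun y => RA.dist s0 y) ⟨s0, hs0R⟩
    have hbST : b ∈ S ∪ T := (Finset.mem_filter.mp hbR).1
    have hbreach : RA.Reachable s0 b := (Finset.mem_filter.mp hbR).2
    have hbA : b ∈ A := by
      rcases Finset.mem_union.mp hbST with h | h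
      exacts [hSA h, hTA h]
    set A' := A.erase b with hA'def
    have hA'sub : A' ⊆ A := Finset.erase_subset _ _
    have hA'ss : A' ⊂ A := Finset.erase_ssubset hbA
    have hmle : HG G A' ≤ RA := HG_mono hA'sub
    have avoid' : ∀ y ∈ R, y ≠ b → (HG G A').Reachable s0 y := fun y hy hyb =>
      avoid_lemma (Finset.mem_filter.mp hy).2 (hbmax y hy) hyb
    have off : ∀ x y, ¬ RA.Reachable x s0 → RA.Reachable x y →
        (HG G A').Reachable x y := by
      intro x y hx hxy
      obtain ⟨w⟩ := hxy
      refine reach_erase_of_not_mem_support w ?_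
      intro hbw
      exact hx ((reach_of_mem_support w hbw).trans hbreach.symm)
    by_cases hbT : b ∈ T
    · -- fill case: bring a pebble to b, then freeze it
      have hex : ∃ u, u ∈ S ∧ RA.Reachable s0 u ∧ b ∉ S.erase u ∧
          Relation.ReflTransGen (SetMoveA G A) S (insert b (S.erase u)) := by
        by_cases hbS : b ∈ S
        · refine ⟨b, hbS, hbreach, Finset.notMem_erase _ _, ?_⟩
          rw [Finset.insert_erase hbS]
        · have h1 := hcount b
          have h2 : b ∈ T.filter (fun y => RA.Reachable b y) :=
            Finset.mem_filter.mpr ⟨hbT, SimpleGraph.Reachable.refl b⟩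
          have h3 := Finset.card_pos.mpr ⟨b, h2⟩
          have h4 : (S.filter (fun y => RA.Reachable b y)).Nonempty :=
            Finset.card_pos.mp (by omega)
          obtain ⟨x₀, hx₀⟩ := h4
          obtain ⟨hx₀S, hbx₀⟩ := Finset.mem_filter.mp hx₀
          obtain ⟨w⟩ := hbx₀
          obtain ⟨u, huS, husup, hrtg⟩ := pull_lemma w hx₀S hbS
          exact ⟨u, huS, hbreach.trans (reach_of_mem_support w husup),
            fun hc => hbS (Finset.mem_of_mem_erase hc), hrtg⟩
      obtain ⟨u, huS, hus0, hbS', hrtg1⟩ := hex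
      set S' := S.erase u with hS'def
      set T' := T.erase b with hT'def
      have hS'A' : S' ⊆ A' := by
        intro y hy
        exact Finset.mem_erase.mpr ⟨fun hc => hbS' (hc ▸ hy), hSA (Finset.mem_of_mem_erase hy)⟩
      have hT'A' : T' ⊆ A' := by
        intro y hy
        exact Finset.mem_erase.mpr
          ⟨(Finset.mem_erase.mp hy).1, hTA (Finset.mem_of_mem_erase hy)⟩
      have hcount' : ∀ x : W, (S'.filter (fun y => (HG G A').Reachable x y)).card
            = (T'.filter (fun y => (HG G A').Reachable x y)).card := by
        intro x
        by_cases hx : RA.Reachable x s0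
        · by_cases hx' : (HG G A').Reachable x s0
          · have hSf : S'.filter (fun y => (HG G A').Reachable x y)
                = S'.filter (fun y => RA.Reachable s0 y) := by
              ext y
              simp only [Finset.mem_filter]
              constructor
              · rintro ⟨hyS, hyr⟩
                exact ⟨hyS, hx.symm.trans (hyr.mono hmle)⟩
              · rintro ⟨hyS, hyr⟩
                have hyR : y ∈ R := Finset.mem_filter.mpr
                  ⟨Finset.mem_union_left _ (Finset.mem_of_mem_erase hyS), hyr⟩
                have hyb : y ≠ b := fun hc => hbS' (hc ▸ hyS)
                exact ⟨hyS, hx'.trans (avoid' y hyR hyb)⟩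
            have hTf : T'.filter (fun y => (HG G A').Reachable x y)
                = T'.filter (fun y => RA.Reachable s0 y) := by
              ext y
              simp only [Finset.mem_filter]
              constructor
              · rintro ⟨hyT, hyr⟩
                exact ⟨hyT, hx.symm.trans (hyr.mono hmle)⟩
              · rintro ⟨hyT, hyr⟩
                have hyR : y ∈ R := Finset.mem_filter.mpr
                  ⟨Finset.mem_union_right _ (Finset.mem_of_mem_erase hyT), hyr⟩
                exact ⟨hyT, hx'.trans (avoid' y hyR (Finset.mem_erase.mp hyT).1)⟩
            rw [hSf, hTf, hS'def, hT'def, Finset.filter_erase, Finset.filter_erase,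
              Finset.card_erase_of_mem (Finset.mem_filter.mpr ⟨huS, hus0⟩),
              Finset.card_erase_of_mem (Finset.mem_filter.mpr ⟨hbT, hbreach⟩),
              hcount s0]
          · have hSf : S'.filter (fun y => (HG G A').Reachable x y) = ∅ := by
              rw [Finset.filter_eq_empty_iff]
              intro y hyS hyr
              have hyR : y ∈ R := Finset.mem_filter.mpr
                ⟨Finset.mem_union_left _ (Finset.mem_of_mem_erase hyS),
                 hx.symm.trans (hyr.mono hmle)⟩
              have hyb : y ≠ b := fun hc => hbS' (hc ▸ hyS)
              exact hx' (hyr.trans (avoid' y hyR hyb).symm)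
            have hTf : T'.filter (fun y => (HG G A').Reachable x y) = ∅ := by
              rw [Finset.filter_eq_empty_iff]
              intro y hyT hyr
              have hyR : y ∈ R := Finset.mem_filter.mpr
                ⟨Finset.mem_union_right _ (Finset.mem_of_mem_erase hyT),
                 hx.symm.trans (hyr.mono hmle)⟩
              exact hx' (hyr.trans (avoid' y hyR (Finset.mem_erase.mp hyT).1).symm)
            rw [hSf, hTf]
        · have hSf : S'.filter (fun y => (HG G A').Reachable x y)
              = S.filter (fun y => RA.Reachable x y) := by
            ext y
            simp only [Finset.mem_filter]
            constructor
            · rintro ⟨hyS, hyr⟩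
              exact ⟨Finset.mem_of_mem_erase hyS, hyr.mono hmle⟩
            · rintro ⟨hyS, hyr⟩
              have hyu : y ≠ u := fun hc => hx ((hc ▸ hyr).trans hus0.symm)
              exact ⟨Finset.mem_erase.mpr ⟨hyu, hyS⟩, off x y hx hyr⟩
          have hTf : T'.filter (fun y => (HG G A').Reachable x y)
              = T.filter (fun y => RA.Reachable x y) := by
            ext y
            simp only [Finset.mem_filter]
            constructor
            · rintro ⟨hyT, hyr⟩
              exact ⟨Finset.mem_of_mem_erase hyT, hyr.mono hmle⟩
            · rintro ⟨hyT, hyr⟩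
              have hyb : y ≠ b := fun hc => hx ((hc ▸ hyr).trans hbreach.symm)
              exact ⟨Finset.mem_erase.mpr ⟨hyb, hyT⟩, off x y hx hyr⟩
          rw [hSf, hTf, hcount x]
      have hrec := ih A' hA'ss S' T' hS'A' hT'A' hcount'
      have hlift := rtg_setMoveA_insert hA'sub (Finset.notMem_erase b A) hrec
      rw [Finset.insert_erase hbT] at hlift
      exact hrtg1.trans hlift
    · -- push case: vacate b
      have hbS : b ∈ S := by
        rcases Finset.mem_union.mp hbST with h | h
        · exact h
        · exact absurd h hbT
      have hbFS : b ∈ S.filter (fun y => RA.Reachable s0 y) :=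
        Finset.mem_filter.mpr ⟨hbS, hbreach⟩
      have hbFT : b ∉ T.filter (fun y => RA.Reachable s0 y) :=
        fun h => hbT (Finset.mem_filter.mp h).1
      have hext : ∃ t ∈ T.filter (fun y => RA.Reachable s0 y),
          t ∉ S.filter (fun y => RA.Reachable s0 y) := by
        by_contra hcon
        push_neg at hcon
        have hsub : T.filter (fun y => RA.Reachable s0 y)
            ⊆ (S.filter (fun y => RA.Reachable s0 y)).erase b :=
          fun y hy => Finset.mem_erase.mpr ⟨fun hc => hbFT (hc ▸ hy), hcon y hy⟩
        have h1 := Finset.card_le_card hsub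
        have h2 := Finset.card_erase_of_mem hbFS
        have h3 := hcount s0
        have h4 := Finset.card_pos.mpr ⟨b, hbFS⟩
        omega
      obtain ⟨t, htFT, htFS⟩ := hext
      obtain ⟨htT, hts0⟩ := Finset.mem_filter.mp htFT
      have htS : t ∉ S := fun h => htFS (Finset.mem_filter.mpr ⟨h, hts0⟩)
      have htb : t ≠ b := fun hc => hbT (hc ▸ htT)
      have hbt : RA.Reachable b t := hbreach.symm.trans hts0
      obtain ⟨w0⟩ := hbt
      set P := w0.toPath with hPdef
      obtain ⟨z, hzsup, hzS, hrtg1⟩ := push_lemma P.1 hbS htS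
      have hzb : z ≠ b := fun hc => hzS (hc ▸ hbS)
      have hzA : z ∈ A := mem_A_of_mem_support P.1 hbA hzsup
      have hbdrop : b ∉ (P.1.dropUntil z hzsup).support := by
        intro hbw
        have hnd : P.1.support.Nodup := P.2.support_nodup
        have hspec := SimpleGraph.Walk.take_spec P.1 hzsup
        have hsupp : P.1.support = (P.1.takeUntil z hzsup).support
            ++ (P.1.dropUntil z hzsup).support.tail := by
          conv_lhs => rw [← hspec]
          rw [SimpleGraph.Walk.support_append]
        rw [hsupp] at hnd
        have hdisj := List.disjoint_of_nodup_append hnd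
        have hbtake : b ∈ (P.1.takeUntil z hzsup).support :=
          SimpleGraph.Walk.start_mem_support _
        have hbtail : b ∈ (P.1.dropUntil z hzsup).support.tail := by
          have := SimpleGraph.Walk.support_eq_cons (P.1.dropUntil z hzsup)
          rw [this] at hbw
          rcases List.mem_cons.mp hbw with hc | hc
          · exact absurd hc.symm hzb
          · exact hc
        exact hdisj hbtake hbtail
      have hzt : (HG G A').Reachable z t :=
        reach_erase_of_not_mem_support _ hbdrop
      have hts0' : (HG G A').Reachable s0 t :=
        avoid' t (Finset.mem_filter.mpr ⟨Finset.mem_union_right _ htT, hts0⟩) htb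
      have hzs0' : (HG G A').Reachable s0 z := hts0'.trans hzt.symm
      have hzs0 : RA.Reachable s0 z := hzs0'.mono hmle
      set S' := insert z (S.erase b) with hS'def
      have hS'A' : S' ⊆ A' := by
        intro y hy
        rcases Finset.mem_insert.mp hy with rfl | hy'
        · exact Finset.mem_erase.mpr ⟨hzb, hzA⟩
        · exact Finset.mem_erase.mpr
            ⟨(Finset.mem_erase.mp hy').1, hSA (Finset.mem_of_mem_erase hy')⟩
      have hTA' : T ⊆ A' := fun y hy =>
        Finset.mem_erase.mpr ⟨fun hc => hbT (hc ▸ hy), hTA hy⟩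
      have hcount' : ∀ x : W, (S'.filter (fun y => (HG G A').Reachable x y)).card
            = (T.filter (fun y => (HG G A').Reachable x y)).card := by
        intro x
        by_cases hx : RA.Reachable x s0
        · by_cases hx' : (HG G A').Reachable x s0
          · have hSf : S'.filter (fun y => (HG G A').Reachable x y)
                = S'.filter (fun y => RA.Reachable s0 y) := by
              ext y
              simp only [Finset.mem_filter]
              constructor
              · rintro ⟨hyS, hyr⟩
                exact ⟨hyS, hx.symm.trans (hyr.mono hmle)⟩
              · rintro ⟨hyS, hyr⟩
                rcases Finset.mem_insert.mp hyS with rfl | hy'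
                · exact ⟨hyS, hx'.trans hzs0'⟩
                · have hyR : y ∈ R := Finset.mem_filter.mpr
                    ⟨Finset.mem_union_left _ (Finset.mem_of_mem_erase hy'), hyr⟩
                  exact ⟨hyS, hx'.trans (avoid' y hyR (Finset.mem_erase.mp hy').1)⟩
            have hTf : T.filter (fun y => (HG G A').Reachable x y)
                = T.filter (fun y => RA.Reachable s0 y) := by
              ext y
              simp only [Finset.mem_filter]
              constructor
              · rintro ⟨hyT, hyr⟩
                exact ⟨hyT, hx.symm.trans (hyr.mono hmle)⟩
              · rintro ⟨hyT, hyr⟩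
                have hyR : y ∈ R := Finset.mem_filter.mpr
                  ⟨Finset.mem_union_right _ hyT, hyr⟩
                have hyb : y ≠ b := fun hc => hbT (hc ▸ hyT)
                exact ⟨hyT, hx'.trans (avoid' y hyR hyb)⟩
            rw [hSf, hTf]
            have hzfilter : z ∉ (S.erase b).filter (fun y => RA.Reachable s0 y) :=
              fun hc => hzS (Finset.mem_of_mem_erase (Finset.mem_filter.mp hc).1)
            rw [hS'def, Finset.filter_insert, if_pos hzs0,
              Finset.card_insert_of_notMem hzfilter, Finset.filter_erase,
              Finset.card_erase_of_mem hbFS]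
            have h1 := hcount s0
            have h2 := Finset.card_pos.mpr ⟨b, hbFS⟩
            omega
          · have hSf : S'.filter (fun y => (HG G A').Reachable x y) = ∅ := by
              rw [Finset.filter_eq_empty_iff]
              intro y hyS hyr
              rcases Finset.mem_insert.mp hyS with rfl | hy'
              · exact hx' (hyr.trans hzs0'.symm)
              · have hyR : y ∈ R := Finset.mem_filter.mpr
                  ⟨Finset.mem_union_left _ (Finset.mem_of_mem_erase hy'),
                   hx.symm.trans (hyr.mono hmle)⟩
                exact hx' (hyr.trans (avoid' y hyR (Finset.mem_erase.mp hy').1).symm)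
            have hTf : T.filter (fun y => (HG G A').Reachable x y) = ∅ := by
              rw [Finset.filter_eq_empty_iff]
              intro y hyT hyr
              have hyR : y ∈ R := Finset.mem_filter.mpr
                ⟨Finset.mem_union_right _ hyT, hx.symm.trans (hyr.mono hmle)⟩
              have hyb : y ≠ b := fun hc => hbT (hc ▸ hyT)
              exact hx' (hyr.trans (avoid' y hyR hyb).symm)
            rw [hSf, hTf]
        · have hSf : S'.filter (fun y => (HG G A').Reachable x y)
              = S.filter (fun y => RA.Reachable x y) := by
            ext y
            simp only [Finset.mem_filter]
            constructor
            · rintro ⟨hyS, hyr⟩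
              rcases Finset.mem_insert.mp hyS with rfl | hy'
              · exact absurd ((hyr.mono hmle).trans hzs0.symm) hx
              · exact ⟨Finset.mem_of_mem_erase hy', hyr.mono hmle⟩
            · rintro ⟨hyS, hyr⟩
              have hyb : y ≠ b := fun hc => hx ((hc ▸ hyr).trans hbreach.symm)
              exact ⟨Finset.mem_insert_of_mem (Finset.mem_erase.mpr ⟨hyb, hyS⟩),
                off x y hx hyr⟩
          have hTf : T.filter (fun y => (HG G A').Reachable x y)
              = T.filter (fun y => RA.Reachable x y) := by
            ext y
            simp only [Finset.mem_filter]
            constructor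
            · rintro ⟨hyT, hyr⟩
              exact ⟨hyT, hyr.mono hmle⟩
            · rintro ⟨hyT, hyr⟩
              exact ⟨hyT, off x y hx hyr⟩
          rw [hSf, hTf, hcount x]
      have hrec := ih A' hA'ss S' T hS'A' hTA' hcount'
      exact hrtg1.trans (rtg_setMoveA_mono hA'sub hrec)


/-- A single pebble move on labelled configurations. -/
def ConfigMove (G : SimpleGraph W) {m : ℕ} (E E' : Fin m → W) : Prop :=
  ∃ (i : Fin m) (w : W) (_ : G.Adj (E i) w), (∀ j, E j ≠ w) ∧ E' = Function.update E i w

lemma configMove_injective {m : ℕ} {E E' : Fin m → W} (h : ConfigMove G E E')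
    (hE : Function.Injective E) : Function.Injective E' := by
  obtain ⟨i, w, hadj, hfresh, rfl⟩ := h
  intro a b hab
  by_cases ha : a = i <;> by_cases hb : b = i
  · rw [ha, hb]
  · rw [ha, Function.update_self, Function.update_of_ne hb] at hab
    exact absurd hab.symm (hfresh b)
  · rw [hb, Function.update_self, Function.update_of_ne ha] at hab
    exact absurd hab (hfresh a)
  · rw [Function.update_of_ne ha, Function.update_of_ne hb] at hab
    exact hE hab

lemma configReach_injective {m : ℕ} {E E' : Fin m → W}
    (h : Relation.ReflTransGen (ConfigMove G) E E') (hE : Function.Injective E) :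
    Function.Injective E' := by
  induction h with
  | refl => exact hE
  | tail _ h ih => exact configMove_injective h ih

lemma exists_configMove {m : ℕ} {A S S' : Finset W} (hm : SetMoveA G A S S')
    {E : Fin m → W} (hE : Function.Injective E) (him : Finset.univ.image E = S) :
    ∃ E', ConfigMove G E E' ∧ Finset.univ.image E' = S' := by
  obtain ⟨v, w, hv, hw, hadj, rfl⟩ := hm
  have hvim : v ∈ Finset.univ.image E := him ▸ hv
  obtain ⟨i, -, hEi⟩ := Finset.mem_image.mp hvim
  have hfresh : ∀ j, E j ≠ w := by
    intro j hc
    exact hw (him ▸ Finset.mem_image.mpr ⟨j, Finset.mem_univ j, hc⟩)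
  refine ⟨Function.update E i w, ⟨i, w, hEi ▸ HG_le A hadj, hfresh, rfl⟩, ?_⟩
  ext y
  simp only [Finset.mem_image, Finset.mem_univ, true_and, Finset.mem_insert,
    Finset.mem_erase]
  constructor
  · rintro ⟨j, rfl⟩
    by_cases hj : j = i
    · subst hj; simp
    · rw [Function.update_of_ne hj]
      refine Or.inr ⟨?_, him ▸ Finset.mem_image.mpr ⟨j, Finset.mem_univ j, rfl⟩⟩
      rw [← hEi]
      exact fun hc => hj (hE hc)
  · rintro (rfl | ⟨hyv, hyS⟩)
    · exact ⟨i, by simp⟩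
    · rw [← him] at hyS
      obtain ⟨j, -, rfl⟩ := Finset.mem_image.mp hyS
      have hji : j ≠ i := fun hc => hyv (by rw [hc, hEi])
      exact ⟨j, by rw [Function.update_of_ne hji]⟩

lemma exists_configReach {m : ℕ} {A S T : Finset W}
    (hm : Relation.ReflTransGen (SetMoveA G A) S T) :
    ∀ (E : Fin m → W), Function.Injective E → Finset.univ.image E = S →
    ∃ E', Relation.ReflTransGen (ConfigMove G) E E' ∧ Function.Injective E' ∧
      Finset.univ.image E' = T := by
  induction hm with
  | refl => exact fun E hE him => ⟨E, Relation.ReflTransGen.refl, hE, him⟩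
  | tail _ h ih =>
    intro E hE him
    obtain ⟨E', hr, hE', him'⟩ := ih E hE him
    obtain ⟨E'', hmove, him''⟩ := exists_configMove h hE' him'
    exact ⟨E'', hr.tail hmove, configMove_injective hmove hE', him''⟩


end PebbleAux

section Realize
variable {X : Type*} [TopologicalSpace X] {col : X → X → Prop} {V : Set X}
  {G : SimpleGraph V} {m : ℕ}

lemma mrp_refl (hsym : Symmetric col) (hV : IsPumped col V) {E : Fin m → V}
    (hE : Function.Injective E) :
    MultiRobotPath col (fun i => (E i : X)) (fun i => (E i : X)) := by
  refine ⟨fun _ i => (E i : X), continuous_const, rfl, rfl, ?_⟩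
  intro t i j hij
  exact hV.2 (E i) (E i).2 (E j) (E j).2 (fun hc => hij (hE (Subtype.ext hc)))

lemma mrp_of_configMove (hsym : Symmetric col) (hV : IsPumped col V)
    (p : ∀ v v' : V, G.Adj v v' → unitInterval → X)
    (hp : ∀ (v v' : V) (h : G.Adj v v'),
      Continuous (p v v' h) ∧ p v v' h 0 = (v : X) ∧ p v v' h 1 = (v' : X) ∧
      ∀ t : unitInterval, ∀ u : V, u ≠ v → u ≠ v' → ¬ col (p v v' h t) (u : X))
    {E E' : Fin m → V} (hmove : PebbleAux.ConfigMove G E E')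
    (hE : Function.Injective E) :
    MultiRobotPath col (fun i => (E i : X)) (fun i => (E' i : X)) := by
  obtain ⟨i, w, hadj, hfresh, rfl⟩ := hmove
  obtain ⟨hcont, h0, h1, hguard⟩ := hp (E i) w hadj
  refine ⟨fun t j => if j = i then p (E i) w hadj t else (E j : X), ?_, ?_, ?_, ?_⟩
  · refine continuous_pi fun j => ?_
    by_cases hj : j = i
    · simp only [hj, if_pos rfl]; exact hcont
    · simp only [if_neg hj]; exact continuous_const
  · ext j
    by_cases hj : j = i
    · simp [hj, h0]
    · simp [if_neg hj]
  · ext j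
    by_cases hj : j = i
    · subst hj; simp [h1]
    · simp [if_neg hj, Function.update_of_ne hj]
  · intro t j k hjk
    by_cases hj : j = i <;> by_cases hk : k = i
    · exact absurd (hj.trans hk.symm) hjk
    · simp only [hj, if_true, if_neg hk]
      exact hguard t (E k) (fun hc => hk (hE hc)) (hfresh k)
    · simp only [hk, if_true, if_neg hj]
      exact fun hc => hguard t (E j) (fun hc' => hj (hE hc')) (hfresh j) (hsym hc)
    · simp only [if_neg hj, if_neg hk]
      exact hV.2 (E j) (E j).2 (E k) (E k).2 (fun hc => hjk (hE (Subtype.ext hc)))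

lemma mrp_of_configReach (hsym : Symmetric col) (hV : IsPumped col V)
    (p : ∀ v v' : V, G.Adj v v' → unitInterval → X)
    (hp : ∀ (v v' : V) (h : G.Adj v v'),
      Continuous (p v v' h) ∧ p v v' h 0 = (v : X) ∧ p v v' h 1 = (v' : X) ∧
      ∀ t : unitInterval, ∀ u : V, u ≠ v → u ≠ v' → ¬ col (p v v' h t) (u : X))
    {E E' : Fin m → V} (hreach : Relation.ReflTransGen (PebbleAux.ConfigMove G) E E')
    (hE : Function.Injective E) :
    MultiRobotPath col (fun i => (E i : X)) (fun i => (E' i : X)) := by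
  induction hreach with
  | refl => exact mrp_refl hsym hV hE
  | tail hr h ih =>
    exact MultiRobotPath.trans' ih
      (mrp_of_configMove hsym hV p hp h (PebbleAux.configReach_injective hr hE))

end Realize

section Master
variable {X : Type*} [TopologicalSpace X] {col : X → X → Prop} {V : Set X}
  {G : SimpleGraph V} {m : ℕ}

lemma master (hsym : Symmetric col) (hV : IsPumped col V)
    (p : ∀ v v' : V, G.Adj v v' → unitInterval → X)
    (hp : ∀ (v v' : V) (h : G.Adj v v'),
      Continuous (p v v' h) ∧ p v v' h 0 = (v : X) ∧ p v v' h 1 = (v' : X) ∧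
      ∀ t : unitInterval, ∀ u : V, u ≠ v → u ≠ v' → ¬ col (p v v' h t) (u : X))
    (P Q : Fin m → V) (hP : Function.Injective P) (hQ : Function.Injective Q)
    (hsig : SameSignature G P Q) :
    ∃ τ : Equiv.Perm (Fin m),
      MultiRobotPath col (fun i => (P i : X)) (fun i => (Q (τ i) : X)) := by
  haveI : Fintype V := hV.1.fintype
  have hGH : PebbleAux.HG G (Finset.univ : Finset V) = G := PebbleAux.HG_univ
  set S := Finset.univ.image P with hSdef
  set T := Finset.univ.image Q with hTdef
  have hcount : ∀ x : V,
      (S.filter (fun y => (PebbleAux.HG G Finset.univ).Reachable x y)).card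
      = (T.filter (fun y => (PebbleAux.HG G Finset.univ).Reachable x y)).card := by
    intro x
    rw [hGH]
    have hfS : S.filter (fun y => G.Reachable x y)
        = (Finset.univ.filter (fun i => G.Reachable x (P i))).image P := by
      rw [hSdef, Finset.filter_image]
    have hfT : T.filter (fun y => G.Reachable x y)
        = (Finset.univ.filter (fun j => G.Reachable x (Q j))).image Q := by
      rw [hTdef, Finset.filter_image]
    rw [hfS, hfT, Finset.card_image_of_injective _ hP, Finset.card_image_of_injective _ hQ]
    have h1 := hsig (G.connectedComponentMk x)
    rw [Nat.card_eq_fintype_card, Nat.card_eq_fintype_card, Fintype.card_subtype,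
      Fintype.card_subtype] at h1
    have e1 : Finset.univ.filter (fun i => G.Reachable x (P i))
        = Finset.univ.filter
            (fun i => G.connectedComponentMk (P i) = G.connectedComponentMk x) := by
      apply Finset.filter_congr
      intro i _
      rw [SimpleGraph.ConnectedComponent.eq]
      exact ⟨fun h => h.symm, fun h => h.symm⟩
    have e2 : Finset.univ.filter (fun j => G.Reachable x (Q j))
        = Finset.univ.filter
            (fun j => G.connectedComponentMk (Q j) = G.connectedComponentMk x) := by
      apply Finset.filter_congr
      intro j _
      rw [SimpleGraph.ConnectedComponent.eq]
      exact ⟨fun h => h.symm, fun h => h.symm⟩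
    rw [e1, e2, h1]
  have hrtg := PebbleAux.core (G := G) Finset.univ S T (Finset.subset_univ S)
    (Finset.subset_univ T) (fun x => by convert hcount x using 2 <;> congr!)
  obtain ⟨E', hreach, hE', him'⟩ :=
    PebbleAux.exists_configReach hrtg P hP (by ext y; simp [hSdef])
  have hmrp := mrp_of_configReach hsym hV p hp hreach hP
  -- now produce the permutation
  have hrange : Set.range E' = Set.range Q := by
    have h2 := Finset.ext_iff.mp him'
    simp only [Finset.mem_image, Finset.mem_univ, true_and] at h2
    have hT2 : ∀ a, a ∈ T ↔ ∃ j, Q j = a := by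
      intro a
      simp [hTdef]
    ext y
    simp only [Set.mem_range]
    exact (h2 y).trans (hT2 y)
  let τ : Equiv.Perm (Fin m) :=
    (Equiv.ofInjective E' hE').trans ((Equiv.setCongr hrange).trans
      (Equiv.ofInjective Q hQ).symm)
  have hτ : ∀ i, Q (τ i) = E' i := by
    intro i
    show Q ((Equiv.ofInjective Q hQ).symm
      (Equiv.setCongr hrange (Equiv.ofInjective E' hE' i))) = E' i
    rw [Equiv.apply_ofInjective_symm hQ]
    rfl
  refine ⟨τ, ?_⟩
  have : (fun i => (Q (τ i) : X)) = (fun i => (E' i : X)) := by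
    ext i; rw [hτ i]
  rw [this]
  exact hmrp

end Master

/-- Connecting two pebble graphs: if a multi-robot path connects configuration `C`
of pebble graph `G` to configuration `C'` of pebble graph `G'`, then any
configurations `D ≡ C` (of `G`) and `D' ≡ C'` (of `G'`) are connected by a
multi-robot path, up to a permutation of the robots. -/
theorem multiRobotPath_between_pebbleGraphs {X : Type*} [TopologicalSpace X]
    (col : X → X → Prop) (hsym : Symmetric col)
    (V V' : Set X) (hV : IsPumped col V) (hV' : IsPumped col V')
    (G : SimpleGraph V) (G' : SimpleGraph V')
    (p : ∀ v v' : V, G.Adj v v' → unitInterval → X)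
    (hp : ∀ (v v' : V) (h : G.Adj v v'),
      Continuous (p v v' h) ∧ p v v' h 0 = (v : X) ∧ p v v' h 1 = (v' : X) ∧
      ∀ t : unitInterval, ∀ u : V, u ≠ v → u ≠ v' → ¬ col (p v v' h t) (u : X))
    (p' : ∀ v v' : V', G'.Adj v v' → unitInterval → X)
    (hp' : ∀ (v v' : V') (h : G'.Adj v v'),
      Continuous (p' v v' h) ∧ p' v v' h 0 = (v : X) ∧ p' v v' h 1 = (v' : X) ∧
      ∀ t : unitInterval, ∀ u : V', u ≠ v → u ≠ v' → ¬ col (p' v v' h t) (u : X))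
    {m : ℕ} (C : Fin m → V) (C' : Fin m → V')
    (hC : Function.Injective C) (hC' : Function.Injective C')
    (hconn : MultiRobotPath col (fun i => (C i : X)) (fun i => (C' i : X)))
    (D : Fin m → V) (D' : Fin m → V')
    (hD : Function.Injective D) (hD' : Function.Injective D')
    (hDC : SameSignature G D C) (hDC' : SameSignature G' D' C') :
    ∃ σ : Equiv.Perm (Fin m),
      MultiRobotPath col (fun i => (D i : X)) (fun i => (D' (σ i) : X)) := by
  obtain ⟨τ₁, h1⟩ := master hsym hV p hp D C hD hC hDC
  have h2 : MultiRobotPath col (fun i => (C (τ₁ i) : X)) (fun i => (C' (τ₁ i) : X)) :=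
    MultiRobotPath.reindex hconn τ₁
  have hsig2 : SameSignature G' (fun i => C' (τ₁ i)) D' := by
    intro K
    have e : {i : Fin m // G'.connectedComponentMk (C' (τ₁ i)) = K}
        ≃ {j : Fin m // G'.connectedComponentMk (C' j) = K} :=
      τ₁.subtypeEquiv (fun i => Iff.rfl)
    rw [Nat.card_congr e]
    exact (hDC' K).symm
  obtain ⟨τ₂, h3⟩ := master hsym hV' p' hp' (fun i => C' (τ₁ i)) D'
    (hC'.comp τ₁.injective) hD' hsig2
  exact ⟨τ₂, (h1.trans' h2).trans' h3⟩
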